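/- Let f : X → Y be a compact-preserving function from a topological space X to a Hausdorff space Y. If (x_n) is a sequence in X converging to a point x ∈ X such that the values f(x_n) are pairwise distinct (f(x_n) ≠ f(x_m) for n ≠ m), then the sequence (f(x_n)) converges to f(x). -/

import Mathlib

open Filter Topology Set

def CompactPreserving {X Y : Type*} [TopologicalSpace X] [TopologicalSpace Y]
    (f : X → Y) : Prop := ∀ K : Set X, IsCompact K → IsCompact (f '' K)

theorem stmt4 {X Y : Type*} [TopologicalSpace X] [TopologicalSpace Y] [T2Space Y]
    (f : X → Y) (hf : CompactPreserving f) (u : ℕ → X) (x : X)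
    (hu : Filter.Tendsto u Filter.atTop (𝓝 x))
    (hinj : ∀ n m : ℕ, n ≠ m → f (u n) ≠ f (u m)) :
    Filter.Tendsto (fun n => f (u n)) Filter.atTop (𝓝 (f x)) := by
  by_contra hcon
  rw [(nhds_basis_opens (f x)).tendsto_right_iff] at hcon
  push_neg at hcon
  obtain ⟨V, ⟨hxV, hVopen⟩, hV⟩ := hcon
  obtain ⟨φ, hφ, hφV⟩ := Filter.extraction_of_frequently_atTop hV
  set g : ℕ → Y := fun k => f (u (φ k)) with hg
  have hginj : Function.Injective g := by
    intro a b hab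
    by_contra hne
    exact hinj (φ a) (φ b) (fun h => hne (hφ.injective h)) hab
  have hT : (Set.range g).Infinite := Set.infinite_range_of_injective hginj
  have hK : IsCompact (insert x (Set.range (u ∘ φ))) :=
    (hu.comp hφ.tendsto_atTop).isCompact_insert_range
  have hfK : IsCompact (f '' insert x (Set.range (u ∘ φ))) := hf _ hK
  have hsub : Set.range g ⊆ f '' insert x (Set.range (u ∘ φ)) := by
    rintro _ ⟨k, rfl⟩
    exact ⟨u (φ k), Or.inr ⟨k, rfl⟩, rfl⟩
  obtain ⟨y, hyK, hacc⟩ :=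
    hT.exists_accPt_cofinite_inf_principal_of_subset_isCompact hfK hsub
  -- every neighborhood of `y` meets `range g` in an infinite set
  have key : ∀ W ∈ 𝓝 y, (W ∩ Set.range g).Infinite := by
    intro W hW hfin
    have hc : (W ∩ Set.range g)ᶜ ∈ (cofinite : Filter Y) := hfin.compl_mem_cofinite
    have hne : Filter.NeBot (𝓝 y ⊓ (cofinite ⊓ 𝓟 (Set.range g))) :=
      Filter.NeBot.mono hacc (inf_le_inf_right _ nhdsWithin_le_nhds)
    have h1 : W ∩ ((W ∩ Set.range g)ᶜ ∩ Set.range g) ∈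
        𝓝 y ⊓ (cofinite ⊓ 𝓟 (Set.range g)) :=
      inter_mem_inf hW (inter_mem_inf hc (mem_principal_self _))
    have hempty : W ∩ ((W ∩ Set.range g)ᶜ ∩ Set.range g) = ∅ := by
      ext t
      simp only [Set.mem_inter_iff, Set.mem_compl_iff, Set.mem_empty_iff_false, iff_false]
      rintro ⟨h1, h2, h3⟩
      exact h2 ⟨h1, h3⟩
    rw [hempty] at h1
    exact hne.ne (Filter.empty_mem_iff_bot.mp h1)
  -- `y` is not `f x`, since `range g` avoids `V`
  have hTV : ∀ k, g k ∉ V := hφV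
  have hyne : y ≠ f x := by
    rintro rfl
    have := key V (hVopen.mem_nhds hxV)
    refine this ?_
    have : V ∩ Set.range g = ∅ := by
      ext t
      simp only [Set.mem_inter_iff, Set.mem_empty_iff_false, iff_false]
      rintro ⟨htV, k, rfl⟩
      exact hTV k htV
    rw [this]; exact Set.finite_empty
  -- so `y = g k₀` for some `k₀`
  obtain ⟨z, hz, rfl⟩ := hyK
  rcases hz with rfl | ⟨k₀, rfl⟩
  · exact hyne rfl
  -- consider the compact image of the tail past `k₀`
  have htail : Filter.Tendsto (fun j => u (φ (j + (k₀ + 1)))) Filter.atTop (𝓝 x) :=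
    (hu.comp hφ.tendsto_atTop).comp (tendsto_add_atTop_nat (k₀ + 1))
  have hK₂ : IsCompact (f '' insert x (Set.range (fun j => u (φ (j + (k₀ + 1)))))) :=
    hf _ htail.isCompact_insert_range
  have hclosed : IsClosed (f '' insert x (Set.range (fun j => u (φ (j + (k₀ + 1)))))) :=
    hK₂.isClosed
  have hynot : f (u (φ k₀)) ∉ f '' insert x (Set.range (fun j => u (φ (j + (k₀ + 1))))) := by
    rintro ⟨z, hz, heq⟩
    rcases hz with rfl | ⟨j, rfl⟩
    · exact hyne heq.symm
    · have : g k₀ = g (j + (k₀ + 1)) := heq.symm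
      have := hginj this
      omega
  have hWnhds : (f '' insert x (Set.range (fun j => u (φ (j + (k₀ + 1))))))ᶜ ∈
      𝓝 (f (u (φ k₀))) := hclosed.isOpen_compl.mem_nhds hynot
  have hfin : ((f '' insert x (Set.range (fun j => u (φ (j + (k₀ + 1))))))ᶜ ∩
      Set.range g).Finite := by
    refine Set.Finite.subset ((Set.finite_Iic k₀).image g) ?_
    rintro t ⟨htW, k, rfl⟩
    refine ⟨k, ?_, rfl⟩
    by_contra hk
    simp only [Set.mem_Iic, not_le] at hk
    have hkeq : k - (k₀ + 1) + (k₀ + 1) = k := by omega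
    exact htW ⟨u (φ k), Or.inr ⟨k - (k₀ + 1), by show u (φ (k - (k₀ + 1) + (k₀ + 1))) = u (φ k); rw [hkeq]⟩, rfl⟩
  exact key _ hWnhds hfin
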